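/- The Cesàro operator C on ℓ²(ℕ, ℂ) has Dunford's property (C): for every closed set F ⊆ ℂ, the local spectral subspace {x ∈ ℓ² : σ_C(x) ⊆ F} is a norm-closed linear subspace of ℓ². -/

import Mathlib

/-- `C` is the Cesàro operator on `ℓ²(ℕ, ℂ)`: `(C a)ₙ = (1/(n+1)) ∑_{k=0}^{n} a_k`. -/
def IsCesaro (C : lp (fun _ : ℕ => ℂ) 2 →L[ℂ] lp (fun _ : ℕ => ℂ) 2) : Prop :=
  ∀ (a : lp (fun _ : ℕ => ℂ) 2) (n : ℕ),
    C a n = (∑ k ∈ Finset.range (n + 1), a k) / (n + 1)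

/-- The local resolvent set `ρ_T(y)`: the union of all open `U ⊆ ℂ` admitting an
analytic `g : U → X` with `(T - z) g z = y` on `U`. -/
def localResolvent {X : Type*} [NormedAddCommGroup X] [NormedSpace ℂ X]
    (T : X →L[ℂ] X) (y : X) : Set ℂ :=
  {z | ∃ U : Set ℂ, IsOpen U ∧ z ∈ U ∧
    ∃ g : ℂ → X, DifferentiableOn ℂ g U ∧ ∀ w ∈ U, T (g w) - w • g w = y}

/-- The local spectrum `σ_T(y) = ℂ ∖ ρ_T(y)`. -/
def localSpectrum {X : Type*} [NormedAddCommGroup X] [NormedSpace ℂ X]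
    (T : X →L[ℂ] X) (y : X) : Set ℂ :=
  (localResolvent T y)ᶜ

open Metric Finset Complex Filter Topology ENNReal

noncomputable abbrev E2 := lp (fun _ : ℕ => ℂ) 2

noncomputable def ccseq (μ : ℂ) (n : ℕ) : ℂ := ∏ i ∈ Finset.Ico 1 (n+1), (1 - (μ * i)⁻¹)

lemma ccseq_zero (μ : ℂ) : ccseq μ 0 = 1 := by simp [ccseq]

lemma ccseq_succ (μ : ℂ) (n : ℕ) :
    ccseq μ (n+1) = ccseq μ n * (1 - (μ * (n+1))⁻¹) := by
  rw [ccseq, ccseq, Finset.prod_Ico_succ_top (by omega)]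
  push_cast; ring_nf

lemma ball_facts {μ : ℂ} (hμ : μ ∈ ball (1:ℂ) 1) : μ ≠ 0 ∧ 1/2 < (μ⁻¹).re := by
  have h : ‖μ - 1‖ < 1 := by simpa [mem_ball, dist_eq_norm] using hμ
  have h2 : Complex.normSq (μ - 1) < 1 := by
    have h3 := Complex.sq_norm (μ - 1)
    have h4 : ‖μ - 1‖ < 1 := h
    nlinarith [norm_nonneg (μ - 1)]
  have hsq : Complex.normSq μ < 2 * μ.re := by
    simp only [Complex.normSq_apply, Complex.sub_re, Complex.sub_im, Complex.one_re,
      Complex.one_im] at h2 ⊢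
    nlinarith
  have hμ0 : μ ≠ 0 := by
    rintro rfl; simp at hsq
  refine ⟨hμ0, ?_⟩
  have hns : 0 < Complex.normSq μ := Complex.normSq_pos.2 hμ0
  have h5 : (μ⁻¹).re = μ.re / Complex.normSq μ := by simp [Complex.inv_re]
  rw [h5, lt_div_iff₀ hns]
  nlinarith

lemma bern {p : ℝ} (hp : 1 ≤ p) (m : ℕ) :
    1 - p/(m+1) ≤ ((m:ℝ)/(m+1))^p := by
  have hs : (-1:ℝ) ≤ -(1/((m:ℝ)+1)) := by
    have : (0:ℝ) < (m:ℝ)+1 := by positivity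
    rw [neg_le_neg_iff]
    rw [div_le_one this]; linarith
  have h := one_add_mul_self_le_rpow_one_add hs hp
  have h1 : (1:ℝ) + -(1/((m:ℝ)+1)) = (m:ℝ)/((m:ℝ)+1) := by
    field_simp; ring
  rw [h1] at h
  calc 1 - p/((m:ℝ)+1) = 1 + p * -(1/((m:ℝ)+1)) := by ring
  _ ≤ _ := h

lemma factor_normSq (w : ℂ) {j : ℕ} (hj : 1 ≤ j) :
    ‖1 - w * (j:ℂ)⁻¹‖^2 = 1 - 2*w.re/j + Complex.normSq w / (j:ℝ)^2 := by
  have hj0 : ((j:ℝ)) ≠ 0 := by positivity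
  rw [← Complex.normSq_eq_norm_sq]
  simp only [Complex.normSq_apply, Complex.sub_re, Complex.sub_im, Complex.one_re, Complex.one_im,
    Complex.mul_re, Complex.mul_im]
  have h1 : ((j:ℂ)⁻¹).re = (j:ℝ)⁻¹ := by
    simp [← Complex.ofReal_natCast]
  have h2 : ((j:ℂ)⁻¹).im = 0 := by
    simp [← Complex.ofReal_natCast]
  rw [h1, h2]
  field_simp
  ring

lemma ccseq_norm_sq_prod (μ : ℂ) (n : ℕ) :
    ‖ccseq μ n‖^2 = ∏ i ∈ Finset.Ico 1 (n+1), ‖1 - μ⁻¹ * (i:ℂ)⁻¹‖^2 := by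
  rw [ccseq, norm_prod, ← Finset.prod_pow]
  exact Finset.prod_congr rfl fun i _ => by rw [mul_inv]

/-- single-factor bound -/

lemma claimA_aux {μ : ℂ} {r₁ R : ℝ} (hr₁half : 1/2 < r₁)
    (hre' : r₁ ≤ (μ⁻¹).re) (hnorm : ‖μ⁻¹‖ ≤ R) {J₀ : ℕ} (hJ₀1 : 1 ≤ J₀)
    (hRJ : R^2 ≤ (r₁ - 1/2) * J₀) {j : ℕ} (hj : J₀ ≤ j) :
    ‖1 - μ⁻¹ * (j:ℂ)⁻¹‖^2 ≤ 1 - (r₁ + 1/2)/j := by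
  have hj1 : 1 ≤ j := hJ₀1.trans hj
  have hjpos : (0:ℝ) < j := by exact_mod_cast Nat.pos_of_ne_zero (by omega)
  have hJj : (J₀:ℝ) ≤ (j:ℝ) := by exact_mod_cast hj
  have hnsq : Complex.normSq (μ⁻¹) ≤ R^2 := by
    have h := Complex.sq_norm (μ⁻¹)
    nlinarith [norm_nonneg (μ⁻¹)]
  rw [factor_normSq _ hj1]
  have e1 : Complex.normSq (μ⁻¹) / (j:ℝ)^2 ≤ (r₁ - 1/2)/(j:ℝ) := by
    rw [div_le_div_iff₀ (by positivity) hjpos]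
    calc Complex.normSq μ⁻¹ * (j:ℝ) ≤ ((r₁-1/2)*(J₀:ℝ))*(j:ℝ) :=
          mul_le_mul_of_nonneg_right (hnsq.trans hRJ) hjpos.le
    _ ≤ ((r₁-1/2)*(j:ℝ))*(j:ℝ) :=
        mul_le_mul_of_nonneg_right
          (mul_le_mul_of_nonneg_left hJj (by linarith)) hjpos.le
    _ = (r₁-1/2)*(j:ℝ)^2 := by ring
  have e2 : 2*r₁/(j:ℝ) ≤ 2*(μ⁻¹).re/(j:ℝ) := by gcongr
  have e4 : 1 - (r₁ + 1/2)/(j:ℝ) = 1 - 2*r₁/(j:ℝ) + (r₁-1/2)/(j:ℝ) := by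
    field_simp; ring
  linarith

/-- tail product bound -/

lemma tailprod {μ : ℂ} {p : ℝ} (hp1 : 1 < p) {J₀ : ℕ} (hJ₀1 : 1 ≤ J₀)
    (hA : ∀ j : ℕ, J₀ ≤ j → ‖1 - μ⁻¹ * (j:ℂ)⁻¹‖^2 ≤ 1 - p/j) :
    ∀ n : ℕ, J₀ ≤ n →
      ∏ i ∈ Finset.Ico J₀ (n+1), ‖1 - μ⁻¹ * (i:ℂ)⁻¹‖^2 ≤ ((J₀:ℝ)/((n:ℝ)+1))^p := by
  intro n hn
  induction n, hn using Nat.le_induction with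
  | base =>
    rw [Finset.prod_Ico_succ_top le_rfl, Finset.Ico_self, Finset.prod_empty, one_mul]
    have h0 : (0:ℝ) < (J₀:ℝ) := by exact_mod_cast hJ₀1
    calc ‖1 - μ⁻¹ * (J₀:ℂ)⁻¹‖^2 ≤ 1 - p/(J₀:ℝ) := hA J₀ le_rfl
    _ ≤ 1 - p/((J₀:ℝ)+1) := by
        have : p/((J₀:ℝ)+1) ≤ p/(J₀:ℝ) := by gcongr <;> linarith
        linarith
    _ ≤ ((J₀:ℝ)/((J₀:ℝ)+1))^p := bern hp1.le J₀
  | succ n hn ih =>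
    rw [Finset.prod_Ico_succ_top (by omega : J₀ ≤ n+1)]
    have hcast : (((n+1:ℕ)):ℝ) = (n:ℝ)+1 := by push_cast; ring
    have hfac : ‖1 - μ⁻¹ * ((n+1:ℕ):ℂ)⁻¹‖^2 ≤ (((n:ℝ)+1)/((n:ℝ)+1+1))^p := by
      have hb := bern hp1.le (n+1)
      rw [hcast] at hb
      have h1 := hA (n+1) (by omega)
      rw [hcast] at h1
      have h0 : (0:ℝ) < (n:ℝ)+1 := by positivity
      have h2 : p/((n:ℝ)+1+1) ≤ p/((n:ℝ)+1) := by gcongr <;> linarith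
      calc ‖1 - μ⁻¹ * ((n+1:ℕ):ℂ)⁻¹‖^2 ≤ 1 - p/((n:ℝ)+1) := h1
      _ ≤ 1 - p/((n:ℝ)+1+1) := by linarith
      _ ≤ (((n:ℝ)+1)/((n:ℝ)+1+1))^p := hb
    calc (∏ i ∈ Finset.Ico J₀ (n+1), ‖1 - μ⁻¹ * (i:ℂ)⁻¹‖^2) * ‖1 - μ⁻¹ * ((n+1:ℕ):ℂ)⁻¹‖^2
        ≤ ((J₀:ℝ)/((n:ℝ)+1))^p * (((n:ℝ)+1)/((n:ℝ)+1+1))^p :=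
          mul_le_mul ih hfac (sq_nonneg _) (Real.rpow_nonneg (by positivity) _)
    _ = (((J₀:ℝ)/((n:ℝ)+1)) * (((n:ℝ)+1)/((n:ℝ)+1+1)))^p := by
          rw [← Real.mul_rpow (by positivity) (by positivity)]
    _ = (((J₀:ℝ))/(((n+1:ℕ):ℝ)+1))^p := by
          congr 1
          have h1 : ((n:ℝ)+1) ≠ 0 := by positivity
          push_cast
          field_simp

lemma lead_bound {μ : ℂ} {R : ℝ} (hnorm : ‖μ⁻¹‖ ≤ R) {i : ℕ} (hi : 1 ≤ i) :
    ‖1 - μ⁻¹ * (i:ℂ)⁻¹‖^2 ≤ (1+R)^2 := by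
  have h1 : ‖((i:ℂ))⁻¹‖ ≤ 1 := by
    rw [norm_inv]
    have : (1:ℝ) ≤ ‖((i:ℂ))‖ := by
      rw [Complex.norm_natCast]
      exact_mod_cast hi
    rw [inv_le_one_iff₀]; right; exact this
  have h2 : ‖1 - μ⁻¹ * (i:ℂ)⁻¹‖ ≤ 1 + R := by
    calc ‖1 - μ⁻¹ * (i:ℂ)⁻¹‖ ≤ ‖(1:ℂ)‖ + ‖μ⁻¹ * (i:ℂ)⁻¹‖ := norm_sub_le _ _
    _ ≤ 1 + R := by
        rw [norm_one, norm_mul]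
        have h0 : (0:ℝ) ≤ ‖μ⁻¹‖ := norm_nonneg _
        nlinarith [norm_nonneg ((i:ℂ))⁻¹]
  have h0 : (0:ℝ) ≤ ‖1 - μ⁻¹ * (i:ℂ)⁻¹‖ := norm_nonneg _
  nlinarith

/-- Full pointwise bound from leading + tail bounds. -/

lemma full_bound {μ : ℂ} {p R : ℝ} {J₀ : ℕ} (hp1 : 1 < p) (hJ₀1 : 1 ≤ J₀) (hR1 : 1 ≤ R)
    (hnorm : ‖μ⁻¹‖ ≤ R)
    (htail : ∀ n : ℕ, J₀ ≤ n →
      ∏ i ∈ Finset.Ico J₀ (n+1), ‖1 - μ⁻¹ * (i:ℂ)⁻¹‖^2 ≤ ((J₀:ℝ)/((n:ℝ)+1))^p)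
    (n : ℕ) :
    ‖ccseq μ n‖^2 ≤ ((1+R)^(2*J₀) * (J₀:ℝ)^p) * ((n:ℝ)+1) ^ (-p) := by
  have hJpos : (0:ℝ) < (J₀:ℝ) := by exact_mod_cast hJ₀1
  have h1R : (1:ℝ) ≤ 1 + R := by linarith
  have hnn : ∀ i ∈ Finset.Ico 1 (n+1), (0:ℝ) ≤ ‖1 - μ⁻¹ * (i:ℂ)⁻¹‖^2 :=
    fun i _ => sq_nonneg _
  rw [ccseq_norm_sq_prod]
  rcases le_or_gt (n+1) J₀ with h | h
  · have hb : ∏ i ∈ Finset.Ico 1 (n+1), ‖1 - μ⁻¹ * (i:ℂ)⁻¹‖^2 ≤ (1+R)^(2*J₀) := by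
      calc ∏ i ∈ Finset.Ico 1 (n+1), ‖1 - μ⁻¹ * (i:ℂ)⁻¹‖^2
          ≤ ∏ _i ∈ Finset.Ico 1 (n+1), (1+R)^2 :=
            Finset.prod_le_prod hnn (fun i hi => lead_bound hnorm (Finset.mem_Ico.1 hi).1)
      _ = ((1+R)^2)^n := by rw [Finset.prod_const, Nat.card_Ico]; norm_num
      _ = (1+R)^(2*n) := by rw [← pow_mul]
      _ ≤ (1+R)^(2*J₀) := pow_le_pow_right₀ h1R (by omega)
    have hone : 1 ≤ (J₀:ℝ)^p * ((n:ℝ)+1)^(-p) := by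
      rw [Real.rpow_neg (by positivity), ← div_eq_mul_inv, le_div_iff₀ (by positivity), one_mul]
      exact Real.rpow_le_rpow (by positivity) (by exact_mod_cast h) (by linarith)
    calc ∏ i ∈ Finset.Ico 1 (n+1), ‖1 - μ⁻¹ * (i:ℂ)⁻¹‖^2 ≤ (1+R)^(2*J₀) := hb
    _ = (1+R)^(2*J₀) * 1 := (mul_one _).symm
    _ ≤ (1+R)^(2*J₀) * ((J₀:ℝ)^p * ((n:ℝ)+1)^(-p)) := by
        apply mul_le_mul_of_nonneg_left hone (by positivity)
    _ = ((1+R)^(2*J₀) * (J₀:ℝ)^p) * ((n:ℝ)+1)^(-p) := by ring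
  · have hJn : J₀ ≤ n := by omega
    rw [← Finset.prod_Ico_consecutive _ hJ₀1 (by omega : J₀ ≤ n+1)]
    have hb1 : ∏ i ∈ Finset.Ico 1 J₀, ‖1 - μ⁻¹ * (i:ℂ)⁻¹‖^2 ≤ (1+R)^(2*J₀) := by
      calc ∏ i ∈ Finset.Ico 1 J₀, ‖1 - μ⁻¹ * (i:ℂ)⁻¹‖^2
          ≤ ∏ _i ∈ Finset.Ico 1 J₀, (1+R)^2 :=
            Finset.prod_le_prod (fun i _ => sq_nonneg _)
              (fun i hi => lead_bound hnorm (Finset.mem_Ico.1 hi).1)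
      _ = ((1+R)^2)^(J₀-1) := by rw [Finset.prod_const, Nat.card_Ico]
      _ = (1+R)^(2*(J₀-1)) := by rw [← pow_mul]
      _ ≤ (1+R)^(2*J₀) := pow_le_pow_right₀ h1R (by omega)
    have hb2 : ∏ i ∈ Finset.Ico J₀ (n+1), ‖1 - μ⁻¹ * (i:ℂ)⁻¹‖^2
        ≤ (J₀:ℝ)^p * ((n:ℝ)+1)^(-p) := by
      calc ∏ i ∈ Finset.Ico J₀ (n+1), ‖1 - μ⁻¹ * (i:ℂ)⁻¹‖^2
          ≤ ((J₀:ℝ)/((n:ℝ)+1))^p := htail n hJn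
      _ = (J₀:ℝ)^p * ((n:ℝ)+1)^(-p) := by
          rw [Real.div_rpow (by positivity) (by positivity), Real.rpow_neg (by positivity),
            div_eq_mul_inv]
    calc (∏ i ∈ Finset.Ico 1 J₀, ‖1 - μ⁻¹ * (i:ℂ)⁻¹‖^2) *
          ∏ i ∈ Finset.Ico J₀ (n+1), ‖1 - μ⁻¹ * (i:ℂ)⁻¹‖^2
        ≤ (1+R)^(2*J₀) * ((J₀:ℝ)^p * ((n:ℝ)+1)^(-p)) :=
          mul_le_mul hb1 hb2 (Finset.prod_nonneg fun i _ => sq_nonneg _) (by positivity)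
    _ = ((1+R)^(2*J₀) * (J₀:ℝ)^p) * ((n:ℝ)+1)^(-p) := by ring

lemma exists_unif_bound {μ₀ : ℂ} (hμ₀ : μ₀ ∈ ball (1:ℂ) 1) :
    ∃ δ : ℝ, 0 < δ ∧ closedBall μ₀ δ ⊆ ball (1:ℂ) 1 ∧
    ∃ K p : ℝ, 0 ≤ K ∧ 1 < p ∧
      ∀ μ ∈ closedBall μ₀ δ, ∀ n : ℕ, ‖ccseq μ n‖^2 ≤ K * ((n:ℝ)+1) ^ (-p) := by
  obtain ⟨hμ0ne, hre⟩ := ball_facts hμ₀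
  set r₁ : ℝ := ((μ₀⁻¹).re + 1/2)/2 with hr₁
  have hr₁half : 1/2 < r₁ := by rw [hr₁]; linarith
  have hr₁lt : r₁ < (μ₀⁻¹).re := by rw [hr₁]; linarith
  set R : ℝ := ‖μ₀⁻¹‖ + 1 with hR
  have hR1 : 1 ≤ R := by have := norm_nonneg (μ₀⁻¹); rw [hR]; linarith
  have hcont : ContinuousAt (fun μ : ℂ => μ⁻¹) μ₀ := continuousAt_inv₀ hμ0ne
  have hεpos : 0 < min ((μ₀⁻¹).re - r₁) 1 := lt_min (by linarith) one_pos
  obtain ⟨δ', hδ'pos, hδ'⟩ := Metric.continuousAt_iff.1 hcont _ hεpos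
  have hd1 : dist μ₀ (1:ℂ) < 1 := by simpa [mem_ball] using hμ₀
  refine ⟨min (δ'/2) ((1 - dist μ₀ 1)/2), lt_min (by linarith) (by linarith), ?_, ?_⟩
  · intro μ hμ
    rw [mem_closedBall] at hμ
    have h2 : dist μ μ₀ ≤ (1 - dist μ₀ 1)/2 := hμ.trans (min_le_right _ _)
    rw [mem_ball]
    calc dist μ 1 ≤ dist μ μ₀ + dist μ₀ 1 := dist_triangle _ _ _
    _ < 1 := by linarith
  have hkey : ∀ μ ∈ closedBall μ₀ (min (δ'/2) ((1 - dist μ₀ 1)/2)),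
      r₁ ≤ (μ⁻¹).re ∧ ‖μ⁻¹‖ ≤ R := by
    intro μ hμ
    rw [mem_closedBall] at hμ
    have h2 : dist μ μ₀ ≤ δ'/2 := hμ.trans (min_le_left _ _)
    have h := hδ' (show dist μ μ₀ < δ' by linarith)
    rw [dist_eq_norm] at h
    have h1 : |(μ⁻¹ - μ₀⁻¹).re| ≤ ‖μ⁻¹ - μ₀⁻¹‖ := Complex.abs_re_le_norm _
    have h2' : ‖μ⁻¹ - μ₀⁻¹‖ < (μ₀⁻¹).re - r₁ := lt_of_lt_of_le h (min_le_left _ _)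
    have h3 : ‖μ⁻¹ - μ₀⁻¹‖ < 1 := lt_of_lt_of_le h (min_le_right _ _)
    constructor
    · have he : (μ⁻¹ - μ₀⁻¹).re = (μ⁻¹).re - (μ₀⁻¹).re := by simp
      rw [he] at h1
      rcases abs_le.1 h1 with ⟨hl, hr2⟩
      linarith
    · calc ‖μ⁻¹‖ = ‖μ₀⁻¹ + (μ⁻¹ - μ₀⁻¹)‖ := by ring_nf
      _ ≤ ‖μ₀⁻¹‖ + ‖μ⁻¹ - μ₀⁻¹‖ := norm_add_le _ _
      _ ≤ R := by rw [hR]; linarith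
  set p : ℝ := r₁ + 1/2 with hp
  have hp1 : 1 < p := by rw [hp]; linarith
  set J₀ : ℕ := ⌈max (R^2/(r₁ - 1/2)) p⌉₊ + 1 with hJ₀def
  have hJ₀1 : 1 ≤ J₀ := Nat.le_add_left 1 _
  have hJ₀R : R^2/(r₁-1/2) ≤ (J₀:ℝ) := by
    calc R^2/(r₁-1/2) ≤ max (R^2/(r₁ - 1/2)) p := le_max_left _ _
    _ ≤ (⌈max (R^2/(r₁ - 1/2)) p⌉₊ : ℝ) := Nat.le_ceil _
    _ ≤ (J₀:ℝ) := by rw [hJ₀def]; push_cast; linarith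
  have hRJ : R^2 ≤ (r₁ - 1/2) * J₀ := by
    rw [div_le_iff₀ (by linarith : (0:ℝ) < r₁ - 1/2)] at hJ₀R
    linarith
  refine ⟨(1+R)^(2*J₀) * (J₀:ℝ)^p, p, by positivity, hp1, ?_⟩
  intro μ hμ n
  obtain ⟨hre', hnorm⟩ := hkey μ hμ
  exact full_bound hp1 hJ₀1 hR1 hnorm
    (tailprod hp1 hJ₀1 (fun j hj => claimA_aux hr₁half hre' hnorm hJ₀1 hRJ hj)) n

lemma exists_bound_single {μ : ℂ} (hμ : μ ∈ ball (1:ℂ) 1) :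
    ∃ K p : ℝ, 0 ≤ K ∧ 1 < p ∧ ∀ n : ℕ, ‖ccseq μ n‖^2 ≤ K * ((n:ℝ)+1) ^ (-p) := by
  obtain ⟨δ, hδpos, _, K, p, hK, hp, hb⟩ := exists_unif_bound hμ
  exact ⟨K, p, hK, hp, hb μ (mem_closedBall_self hδpos.le)⟩

lemma summable_bound {p : ℝ} (hp : 1 < p) (K : ℝ) :
    Summable (fun n : ℕ => K * ((n:ℝ)+1)^(-p)) := by
  apply Summable.mul_left
  have h1 : Summable (fun n : ℕ => (((n:ℝ))^p)⁻¹) := Real.summable_nat_rpow_inv.2 hp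
  have h2 := (summable_nat_add_iff 1).2 h1
  apply h2.congr
  intro n
  rw [Real.rpow_neg (by positivity)]
  congr 2
  push_cast
  ring

lemma summable_ccsq {μ : ℂ} (hμ : μ ∈ ball (1:ℂ) 1) :
    Summable (fun n : ℕ => ‖ccseq μ n‖^2) := by
  obtain ⟨K, p, hK, hp, hb⟩ := exists_bound_single hμ
  exact Summable.of_nonneg_of_le (fun n => sq_nonneg _) hb (summable_bound hp K)

lemma tail_zero {μ : ℂ} (hμ : μ ∈ ball (1:ℂ) 1) {G : ℝ} (hG : 0 ≤ G) :
    Tendsto (fun N : ℕ => ‖ccseq μ (N+1)‖ * (Real.sqrt ((N:ℝ)+1) * G)) atTop (𝓝 0) := by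
  obtain ⟨K, p, hK, hp, hb⟩ := exists_bound_single hμ
  have hKs : (0:ℝ) ≤ Real.sqrt K := Real.sqrt_nonneg K
  have hbound : ∀ N : ℕ, ‖ccseq μ (N+1)‖ * (Real.sqrt ((N:ℝ)+1) * G)
      ≤ (Real.sqrt K * G) * ((N:ℝ)+1) ^ (-((p-1)/2)) := by
    intro N
    have h1pos : (0:ℝ) < (N:ℝ)+1 := by positivity
    have h2pos : (0:ℝ) < (N:ℝ)+1+1 := by positivity
    have hc : ‖ccseq μ (N+1)‖ ≤ Real.sqrt K * ((N:ℝ)+1) ^ (-p/2) := by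
      have h1 : ‖ccseq μ (N+1)‖^2 ≤ K * (((N+1:ℕ):ℝ)+1)^(-p) := hb (N+1)
      have h2 : (((N+1:ℕ):ℝ)+1)^(-p) ≤ ((N:ℝ)+1)^(-p) := by
        apply Real.rpow_le_rpow_of_nonpos h1pos (by push_cast; linarith) (by linarith)
      have h3 : ‖ccseq μ (N+1)‖^2 ≤ K * ((N:ℝ)+1)^(-p) :=
        h1.trans (mul_le_mul_of_nonneg_left h2 hK)
      have h4 : ‖ccseq μ (N+1)‖ = Real.sqrt (‖ccseq μ (N+1)‖^2) :=
        (Real.sqrt_sq (norm_nonneg _)).symm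
      rw [h4]
      calc Real.sqrt (‖ccseq μ (N+1)‖^2) ≤ Real.sqrt (K * ((N:ℝ)+1)^(-p)) :=
        Real.sqrt_le_sqrt h3
      _ = Real.sqrt K * Real.sqrt (((N:ℝ)+1) ^ (-p)) := Real.sqrt_mul hK _
      _ = Real.sqrt K * ((N:ℝ)+1) ^ (-p/2) := by
          rw [Real.sqrt_eq_rpow (((N:ℝ)+1) ^ (-p)), ← Real.rpow_mul h1pos.le]
          rw [show -p * (1/2:ℝ) = -p/2 by ring]
    have hs : Real.sqrt ((N:ℝ)+1) = ((N:ℝ)+1) ^ ((1:ℝ)/2) := Real.sqrt_eq_rpow _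
    calc ‖ccseq μ (N+1)‖ * (Real.sqrt ((N:ℝ)+1) * G)
        ≤ (Real.sqrt K * ((N:ℝ)+1) ^ (-p/2)) * (Real.sqrt ((N:ℝ)+1) * G) := by
          apply mul_le_mul_of_nonneg_right hc (by positivity)
    _ = (Real.sqrt K * G) * (((N:ℝ)+1) ^ (-p/2) * ((N:ℝ)+1) ^ ((1:ℝ)/2)) := by
          rw [hs]; ring
    _ = (Real.sqrt K * G) * ((N:ℝ)+1) ^ (-((p-1)/2)) := by
          rw [← Real.rpow_add h1pos]
          congr 1
          ring
  have hlim : Tendsto (fun N : ℕ => (Real.sqrt K * G) * ((N:ℝ)+1) ^ (-((p-1)/2))) atTop (𝓝 0) := by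
    have h1 : Tendsto (fun x : ℝ => x ^ (-((p-1)/2))) atTop (𝓝 0) :=
      tendsto_rpow_neg_atTop (by linarith)
    have h2 : Tendsto (fun N : ℕ => (N:ℝ)+1) atTop atTop :=
      tendsto_atTop_add_const_right atTop 1 tendsto_natCast_atTop_atTop
    have h3 := (h1.comp h2).const_mul (Real.sqrt K * G)
    simpa [Function.comp] using h3
  apply squeeze_zero (fun N => by positivity) hbound hlim

lemma lp2_summable_sq (x : lp (fun _ : ℕ => ℂ) 2) : Summable (fun n => ‖x n‖^2) := by
  have h := lp.memℓp x
  rw [memℓp_gen_iff (by norm_num : 0 < (2:ℝ≥0∞).toReal)] at h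
  have h2 : (2:ℝ≥0∞).toReal = 2 := by norm_num
  rw [h2] at h
  apply h.congr
  intro n
  rw [show ((2:ℝ)) = ((2:ℕ):ℝ) by norm_num, Real.rpow_natCast]

lemma summable_mul_sq {a b : ℕ → ℂ} (ha : Summable (fun n => ‖a n‖^2))
    (hb : Summable (fun n => ‖b n‖^2)) : Summable (fun n => a n * b n) := by
  apply Summable.of_norm
  apply Summable.of_nonneg_of_le (fun n => norm_nonneg _)
    (fun n => ?_) (((ha.add hb).mul_left (1/2)))
  rw [norm_mul]
  have h := sq_nonneg (‖a n‖ - ‖b n‖)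
  nlinarith [norm_nonneg (a n), norm_nonneg (b n)]

lemma ccrec {μ : ℂ} (hμ0 : μ ≠ 0) (k : ℕ) :
    ccseq μ k * (((k:ℂ))+1)⁻¹ = μ * (ccseq μ k - ccseq μ (k+1)) := by
  rw [ccseq_succ]
  have hk : ((k:ℂ))+1 ≠ 0 := by
    intro h
    have := congrArg Complex.re h
    push_cast at this
    simp at this
    linarith [Nat.cast_nonneg (α := ℝ) k]
  field_simp
  ring

lemma partial_identity {μ : ℂ} (hμ0 : μ ≠ 0) (g : ℕ → ℂ) (N : ℕ) :
    ∑ n ∈ Finset.range (N+1), ccseq μ n * ((∑ k ∈ Finset.range (n+1), g k) / ((n:ℂ)+1))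
      = μ * ((∑ n ∈ Finset.range (N+1), ccseq μ n * g n)
          - ccseq μ (N+1) * ∑ k ∈ Finset.range (N+1), g k) := by
  induction N with
  | zero =>
    have h0 : ccseq μ 0 * ((0:ℂ)+1)⁻¹ = μ * (ccseq μ 0 - ccseq μ 1) := by
      have h := ccrec hμ0 0
      push_cast at h
      exact h
    simp only [zero_add, Finset.sum_range_one, Nat.cast_zero]
    rw [div_eq_mul_inv]
    linear_combination g 0 * h0
  | succ N ih =>
    rw [Finset.sum_range_succ
      (fun n => ccseq μ n * ((∑ k ∈ Finset.range (n+1), g k) / ((n:ℂ)+1))) (N+1), ih]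
    rw [Finset.sum_range_succ (fun n => ccseq μ n * g n) (N+1)]
    rw [show (∑ k ∈ Finset.range (N+1+1), g k) = (∑ k ∈ Finset.range (N+1), g k) + g (N+1)
      from Finset.sum_range_succ g (N+1)]
    have h := ccrec hμ0 (N+1)
    push_cast at h ⊢
    rw [div_eq_mul_inv]
    linear_combination ((∑ k ∈ Finset.range (N+1), g k) + g (N+1)) * h

lemma key_tsum (C : lp (fun _ : ℕ => ℂ) 2 →L[ℂ] lp (fun _ : ℕ => ℂ) 2)
    (hC : IsCesaro C) {μ : ℂ} (hμ : μ ∈ ball (1:ℂ) 1) (h : lp (fun _ : ℕ => ℂ) 2) :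
    ∑' n, ccseq μ n * C h n = μ * ∑' n, ccseq μ n * h n := by
  obtain ⟨hμ0, -⟩ := ball_facts hμ
  have s1 : Summable (fun n => ccseq μ n * C h n) :=
    summable_mul_sq (summable_ccsq hμ) (lp2_summable_sq (C h))
  have s2 : Summable (fun n => ccseq μ n * h n) :=
    summable_mul_sq (summable_ccsq hμ) (lp2_summable_sq h)
  set T : ℝ := ∑' n, ‖h n‖^2 with hT
  have hTnn : 0 ≤ T := tsum_nonneg (fun n => sq_nonneg _)
  -- limit of left partial sums
  have hT1 : Tendsto (fun N : ℕ => ∑ n ∈ Finset.range (N+1), ccseq μ n * C h n)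
      atTop (𝓝 (∑' n, ccseq μ n * C h n)) :=
    s1.hasSum.tendsto_sum_nat.comp (tendsto_add_atTop_nat 1)
  -- rewrite partial sums via the telescoping identity
  have heq : ∀ N : ℕ, ∑ n ∈ Finset.range (N+1), ccseq μ n * C h n
      = μ * ((∑ n ∈ Finset.range (N+1), ccseq μ n * h n)
          - ccseq μ (N+1) * ∑ k ∈ Finset.range (N+1), h k) := by
    intro N
    rw [← partial_identity hμ0 (fun k => h k) N]
    exact Finset.sum_congr rfl fun n _ => by rw [hC h n]
  -- limit of the right side
  have hS : Tendsto (fun N : ℕ => ∑ n ∈ Finset.range (N+1), ccseq μ n * h n)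
      atTop (𝓝 (∑' n, ccseq μ n * h n)) :=
    s2.hasSum.tendsto_sum_nat.comp (tendsto_add_atTop_nat 1)
  have hA : Tendsto (fun N : ℕ => ccseq μ (N+1) * ∑ k ∈ Finset.range (N+1), h k)
      atTop (𝓝 0) := by
    rw [tendsto_zero_iff_norm_tendsto_zero]
    apply squeeze_zero (fun N => norm_nonneg _) _ (tail_zero hμ (Real.sqrt_nonneg T))
    intro N
    rw [norm_mul]
    apply mul_le_mul_of_nonneg_left _ (norm_nonneg _)
    have h1 : ‖∑ k ∈ Finset.range (N+1), h k‖ ≤ ∑ k ∈ Finset.range (N+1), ‖h k‖ :=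
      norm_sum_le _ _
    have h2 : (∑ k ∈ Finset.range (N+1), ‖h k‖)^2
        ≤ (Finset.range (N+1)).card * ∑ k ∈ Finset.range (N+1), ‖h k‖^2 :=
      sq_sum_le_card_mul_sum_sq
    have h3 : ∑ k ∈ Finset.range (N+1), ‖h k‖^2 ≤ T :=
      Summable.sum_le_tsum _ (fun k _ => sq_nonneg _) (lp2_summable_sq h)
    have h4 : (∑ k ∈ Finset.range (N+1), ‖h k‖)^2 ≤ ((N:ℝ)+1) * T := by
      rw [Finset.card_range] at h2
      have : ((N+1:ℕ):ℝ) = (N:ℝ)+1 := by push_cast; ring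
      calc (∑ k ∈ Finset.range (N+1), ‖h k‖)^2
          ≤ ((N+1:ℕ):ℝ) * ∑ k ∈ Finset.range (N+1), ‖h k‖^2 := h2
      _ ≤ ((N:ℝ)+1) * T := by
          rw [this]
          apply mul_le_mul_of_nonneg_left h3 (by positivity)
    have h5 : (0:ℝ) ≤ ∑ k ∈ Finset.range (N+1), ‖h k‖ :=
      Finset.sum_nonneg fun k _ => norm_nonneg _
    calc ‖∑ k ∈ Finset.range (N+1), h k‖ ≤ ∑ k ∈ Finset.range (N+1), ‖h k‖ := h1
    _ = Real.sqrt ((∑ k ∈ Finset.range (N+1), ‖h k‖)^2) := (Real.sqrt_sq h5).symm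
    _ ≤ Real.sqrt (((N:ℝ)+1) * T) := Real.sqrt_le_sqrt h4
    _ = Real.sqrt ((N:ℝ)+1) * Real.sqrt T := Real.sqrt_mul (by positivity) _
  have hT2 : Tendsto (fun N : ℕ => μ * ((∑ n ∈ Finset.range (N+1), ccseq μ n * h n)
      - ccseq μ (N+1) * ∑ k ∈ Finset.range (N+1), h k)) atTop
      (𝓝 (μ * ((∑' n, ccseq μ n * h n) - 0))) :=
    (hS.sub hA).const_mul μ
  rw [sub_zero] at hT2
  exact tendsto_nhds_unique (hT1.congr heq) hT2

lemma ccseq_diffOn {s : Set ℂ} (hs : ∀ μ ∈ s, μ ≠ 0) (n : ℕ) :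
    DifferentiableOn ℂ (fun μ => ccseq μ n) s := by
  induction n with
  | zero => simp only [ccseq_zero]; exact differentiableOn_const 1
  | succ n ih =>
    have : (fun μ => ccseq μ (n+1)) = fun μ => ccseq μ n * (1 - (μ * (n+1))⁻¹) := by
      funext μ; exact ccseq_succ μ n
    rw [this]
    apply ih.mul
    apply DifferentiableOn.const_sub
    apply DifferentiableOn.inv
    · exact (differentiableOn_id.mul_const _)
    · intro μ hμ
      exact mul_ne_zero (hs μ hμ) (by
        intro h
        have := congrArg Complex.re h
        push_cast at this
        simp at this
        linarith [Nat.cast_nonneg (α := ℝ) n])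

lemma f_diffOn (x : lp (fun _ : ℕ => ℂ) 2) :
    DifferentiableOn ℂ (fun μ => ∑' n, ccseq μ n * x n) (ball (1:ℂ) 1) := by
  intro μ₀ hμ₀
  obtain ⟨δ, hδpos, hsub, K, p, hK, hp, hb⟩ := exists_unif_bound hμ₀
  have hopen : IsOpen (ball μ₀ δ) := isOpen_ball
  have hball : ball μ₀ δ ⊆ ball (1:ℂ) 1 := (ball_subset_closedBall).trans hsub
  have hdiff : DifferentiableOn ℂ (fun μ => ∑' n, ccseq μ n * x n) (ball μ₀ δ) := by
    apply differentiableOn_tsum_of_summable_norm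
      (u := fun n : ℕ => (1/2) * (K * ((n:ℝ)+1)^(-p) + ‖x n‖^2))
    · exact ((summable_bound hp K).add (lp2_summable_sq x)).mul_left (1/2)
    · intro n
      exact (ccseq_diffOn (fun μ hμ => (ball_facts (hball hμ)).1) n).mul_const _
    · exact hopen
    · intro n μ hμ
      have hb1 : ‖ccseq μ n‖^2 ≤ K * ((n:ℝ)+1)^(-p) :=
        hb μ (ball_subset_closedBall hμ) n
      rw [norm_mul]
      nlinarith [sq_nonneg (‖ccseq μ n‖ - ‖x n‖), norm_nonneg (ccseq μ n), norm_nonneg (x n),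
        sq_nonneg (‖x n‖)]
  exact (hdiff.differentiableAt (hopen.mem_nhds (mem_ball_self hδpos))).differentiableWithinAt

lemma inv_nat_mem_ball {m : ℕ} (hm : 1 ≤ m) : ((m:ℂ))⁻¹ ∈ ball (1:ℂ) 1 := by
  have hm0 : (0:ℝ) < m := by exact_mod_cast hm
  rw [mem_ball, dist_eq_norm]
  have h1 : ((m:ℂ))⁻¹ - 1 = (((m:ℝ)⁻¹ - 1 : ℝ) : ℂ) := by push_cast; ring
  rw [h1, Complex.norm_real, Real.norm_eq_abs]
  rw [abs_of_nonpos (by rw [sub_nonpos, inv_le_one_iff₀]; right; exact_mod_cast hm)]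
  have : 0 < (m:ℝ)⁻¹ := by positivity
  linarith

lemma ccseq_inv_nat_eq_zero {m n : ℕ} (hm : 1 ≤ m) (hn : m ≤ n) :
    ccseq ((m:ℂ))⁻¹ n = 0 := by
  have hm0 : (m:ℂ) ≠ 0 := by
    exact Nat.cast_ne_zero.2 (by omega : m ≠ 0)
  apply Finset.prod_eq_zero (i := m) (Finset.mem_Ico.2 ⟨hm, by omega⟩)
  rw [inv_mul_cancel₀ hm0]
  simp

lemma ccseq_inv_nat_ne_zero {m n : ℕ} (hm : 1 ≤ m) (hn : n < m) :
    ccseq ((m:ℂ))⁻¹ n ≠ 0 := by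
  have hm0 : (m:ℂ) ≠ 0 := by
    exact Nat.cast_ne_zero.2 (by omega : m ≠ 0)
  rw [ccseq, Finset.prod_ne_zero_iff]
  intro i hi
  obtain ⟨hi1, hi2⟩ := Finset.mem_Ico.1 hi
  have hi0 : (i:ℂ) ≠ 0 := by
    exact Nat.cast_ne_zero.2 (by omega : i ≠ 0)
  intro h
  have h2 : ((m:ℂ)⁻¹ * i)⁻¹ = 1 := by linear_combination -h
  rw [inv_eq_one] at h2
  rw [inv_mul_eq_one₀ hm0] at h2
  have : m = i := by exact_mod_cast h2
  omega

lemma f_vanish (x : lp (fun _ : ℕ => ℂ) 2)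
    (hx : ∀ μ ∈ ball (1:ℂ) 1, ∑' n, ccseq μ n * x n = 0) : x = 0 := by
  have hcoef : ∀ m : ℕ, 1 ≤ m → ∑ n ∈ Finset.range m, ccseq ((m:ℂ))⁻¹ n * x n = 0 := by
    intro m hm
    rw [← tsum_eq_sum (L := SummationFilter.unconditional ℕ) (f := fun n => ccseq ((m:ℂ))⁻¹ n * x n)
      (fun n hn => by
        show ccseq ((m:ℂ))⁻¹ n * x n = 0
        rw [ccseq_inv_nat_eq_zero hm
          (Nat.le_of_not_lt (fun h => hn (Finset.mem_range.2 h))), zero_mul])]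
    exact hx _ (inv_nat_mem_ball hm)
  have hzero : ∀ n, x n = 0 := by
    intro n
    induction n using Nat.strong_induction_on with
    | _ n ih =>
      have h := hcoef (n+1) (by omega)
      rw [Finset.sum_range_succ] at h
      have h2 : ∑ k ∈ Finset.range n, ccseq (((n+1:ℕ):ℂ))⁻¹ k * x k = 0 :=
        Finset.sum_eq_zero (fun k hk => by rw [ih k (Finset.mem_range.1 hk), mul_zero])
      rw [h2, zero_add] at h
      exact (mul_eq_zero.1 h).resolve_left (ccseq_inv_nat_ne_zero (by omega) (by omega))
  apply lp.ext
  funext n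
  simp only [hzero n, lp.coeFn_zero, Pi.zero_apply]

lemma re_conj_mul_le (z w : ℂ) : 2*((starRingEnd ℂ z) * w).re ≤ ‖z‖^2 + ‖w‖^2 := by
  have h1 : ((starRingEnd ℂ z) * w).re ≤ ‖(starRingEnd ℂ z) * w‖ := Complex.re_le_norm _
  rw [norm_mul, RCLike.norm_conj] at h1
  nlinarith [sq_nonneg (‖z‖ - ‖w‖), norm_nonneg z, norm_nonneg w]

lemma re_conj_mul_self (z : ℂ) : ((starRingEnd ℂ z) * z).re = ‖z‖^2 := by
  rw [← Complex.normSq_eq_norm_sq]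
  simp [Complex.normSq_apply, Complex.mul_re]

lemma norm_sub_sq' (z w : ℂ) :
    ‖z - w‖^2 = ‖z‖^2 - 2*((starRingEnd ℂ w) * z).re + ‖w‖^2 := by
  rw [← Complex.normSq_eq_norm_sq, ← Complex.normSq_eq_norm_sq,
    ← Complex.normSq_eq_norm_sq]
  simp [Complex.normSq_apply, Complex.mul_re, Complex.sub_re, Complex.sub_im]
  ring

lemma lp2_norm_sq (f : lp (fun _ : ℕ => ℂ) 2) : ‖f‖^2 = ∑' n, ‖f n‖^2 := by
  have h := lp.norm_rpow_eq_tsum (p := 2) (by norm_num) f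
  have h2 : (2:ℝ≥0∞).toReal = 2 := by norm_num
  rw [h2] at h
  have h3 : ∀ r : ℝ, r ^ (2:ℝ) = r ^ (2:ℕ) := fun r => by
    rw [show ((2:ℝ)) = ((2:ℕ):ℝ) by norm_num, Real.rpow_natCast]
  rw [h3] at h
  rw [h]
  exact tsum_congr fun n => (h3 _)

lemma invariant {C : lp (fun _ : ℕ => ℂ) 2 →L[ℂ] lp (fun _ : ℕ => ℂ) 2}
    (hC : IsCesaro C) (a : lp (fun _ : ℕ => ℂ) 2) (N : ℕ) :
    ∑ n ∈ Finset.range (N+1), ‖C a n‖^2 + ((N:ℝ)+1) * ‖C a N‖^2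
      ≤ ∑ n ∈ Finset.range (N+1), 2 * ((starRingEnd ℂ (a n)) * (C a n)).re := by
  have hA : ∀ n : ℕ, ((n:ℂ)+1) * C a n = ∑ k ∈ Finset.range (n+1), a k := by
    intro n
    rw [hC a n]
    have hn : ((n:ℂ)+1) ≠ 0 := by
      intro h
      have := congrArg Complex.re h
      push_cast at this
      simp at this
      linarith [Nat.cast_nonneg (α := ℝ) n]
    field_simp
  have hrel : ∀ M : ℕ, (a (M+1) : ℂ) = ((M:ℂ)+2) * C a (M+1) - ((M:ℂ)+1) * C a M := by
    intro M
    have h1 := hA (M+1)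
    have h2 := hA M
    rw [Finset.sum_range_succ] at h1
    push_cast at h1 h2 ⊢
    linear_combination h2 - h1
  have h0 : a 0 = C a 0 := by
    have := hA 0
    simpa using this.symm
  induction N with
  | zero =>
    simp only [zero_add, Finset.sum_range_one, Nat.cast_zero, h0, re_conj_mul_self]
    linarith [sq_nonneg ‖C a 0‖]
  | succ N ih =>
    rw [Finset.sum_range_succ (fun n => ‖C a n‖^2) (N+1),
      Finset.sum_range_succ (fun n => 2 * ((starRingEnd ℂ (a n)) * (C a n)).re) (N+1)]
    have e2 : starRingEnd ℂ (a (N+1)) * C a (N+1)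
        = ((N:ℂ)+2) * (starRingEnd ℂ (C a (N+1)) * C a (N+1))
          - ((N:ℂ)+1) * (starRingEnd ℂ (C a N) * C a (N+1)) := by
      rw [hrel N]
      simp only [map_sub, map_mul, map_add, Complex.conj_natCast, map_ofNat, map_one]
      ring
    have e3 : (starRingEnd ℂ (a (N+1)) * C a (N+1)).re
        = ((N:ℝ)+2) * ‖C a (N+1)‖^2 - ((N:ℝ)+1) * (starRingEnd ℂ (C a N) * C a (N+1)).re := by
      rw [e2, Complex.sub_re]
      have c1 : ((N:ℂ)+2) = (((N:ℝ)+2 : ℝ) : ℂ) := by push_cast; ring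
      have c2 : ((N:ℂ)+1) = (((N:ℝ)+1 : ℝ) : ℂ) := by push_cast; ring
      rw [c1, c2, Complex.re_ofReal_mul, Complex.re_ofReal_mul, re_conj_mul_self]
    have hb : 2*((starRingEnd ℂ (C a N)) * C a (N+1)).re ≤ ‖C a N‖^2 + ‖C a (N+1)‖^2 :=
      re_conj_mul_le _ _
    have hNnn : (0:ℝ) ≤ (N:ℝ)+1 := by positivity
    have hcast : ((N+1:ℕ):ℝ) = (N:ℝ)+1 := by push_cast; ring
    rw [hcast]
    have key : ((N:ℝ)+1) * (2*((starRingEnd ℂ (C a N)) * C a (N+1)).re)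
        ≤ ((N:ℝ)+1) * (‖C a N‖^2 + ‖C a (N+1)‖^2) :=
      mul_le_mul_of_nonneg_left hb hNnn
    have expand : 2 * (starRingEnd ℂ (a (N+1)) * C a (N+1)).re
        = 2*((N:ℝ)+2) * ‖C a (N+1)‖^2
          - ((N:ℝ)+1) * (2*((starRingEnd ℂ (C a N)) * C a (N+1)).re) := by
      rw [e3]; ring
    nlinarith [ih]

lemma contraction {C : lp (fun _ : ℕ => ℂ) 2 →L[ℂ] lp (fun _ : ℕ => ℂ) 2}
    (hC : IsCesaro C) (a : lp (fun _ : ℕ => ℂ) 2) : ‖C a - a‖ ≤ ‖a‖ := by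
  have hTnn : (0:ℝ) ≤ ∑' n, ‖a n‖^2 := tsum_nonneg fun n => sq_nonneg _
  have hsq : ‖C a - a‖^2 ≤ ‖a‖^2 := by
    rw [lp2_norm_sq, lp2_norm_sq]
    have hptw : ∀ n : ℕ, ‖(C a - a) n‖^2
        = ‖C a n‖^2 - 2*((starRingEnd ℂ (a n)) * C a n).re + ‖a n‖^2 := by
      intro n
      have h1 : (C a - a) n = C a n - a n := by
        rw [lp.coeFn_sub, Pi.sub_apply]
      rw [h1, norm_sub_sq']
    apply Real.tsum_le_of_sum_range_le (fun n => sq_nonneg _)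
    intro N
    cases N with
    | zero => simpa using hTnn
    | succ N =>
      have hinv := invariant hC a N
      have hnn : (0:ℝ) ≤ ((N:ℝ)+1) * ‖C a N‖^2 := by positivity
      calc ∑ n ∈ Finset.range (N+1), ‖(C a - a) n‖^2
          = ∑ n ∈ Finset.range (N+1),
              (‖C a n‖^2 - 2*((starRingEnd ℂ (a n)) * C a n).re + ‖a n‖^2) :=
            Finset.sum_congr rfl fun n _ => hptw n
      _ = ((∑ n ∈ Finset.range (N+1), ‖C a n‖^2)
            - ∑ n ∈ Finset.range (N+1), 2*((starRingEnd ℂ (a n)) * C a n).re)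
            + ∑ n ∈ Finset.range (N+1), ‖a n‖^2 := by
          rw [Finset.sum_add_distrib, Finset.sum_sub_distrib]
      _ ≤ ∑ n ∈ Finset.range (N+1), ‖a n‖^2 := by linarith
      _ ≤ ∑' n, ‖a n‖^2 := Summable.sum_le_tsum _ (fun _ _ => sq_nonneg _) (lp2_summable_sq a)
  nlinarith [norm_nonneg (C a - a), norm_nonneg a]

lemma isUnit_aux {C : E2 →L[ℂ] E2} (hC : IsCesaro C) {w : ℂ} (hw : 1 < ‖w - 1‖) :
    IsUnit (C - w • (1 : E2 →L[ℂ] E2)) := by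
  have hnorm : ‖C - (1 : E2 →L[ℂ] E2)‖ ≤ 1 := by
    apply ContinuousLinearMap.opNorm_le_bound _ zero_le_one
    intro a
    rw [one_mul, ContinuousLinearMap.sub_apply, ContinuousLinearMap.one_apply]
    exact contraction hC a
  have hw0 : (w - 1) ≠ 0 := by
    intro h; rw [h] at hw; simp at hw; linarith
  set t : E2 →L[ℂ] E2 := (w-1)⁻¹ • (C - 1) with ht
  have htlt : ‖t‖ < 1 := by
    calc ‖t‖ ≤ ‖(w-1)⁻¹‖ * ‖C - (1 : E2 →L[ℂ] E2)‖ :=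
          ContinuousLinearMap.opNorm_smul_le _ _
    _ = ‖w-1‖⁻¹ * ‖C - (1 : E2 →L[ℂ] E2)‖ := by rw [norm_inv]
    _ ≤ ‖w-1‖⁻¹ * 1 := mul_le_mul_of_nonneg_left hnorm (by positivity)
    _ < 1 := by
        rw [mul_one, inv_lt_one_iff₀]
        right; exact hw
  have hu : IsUnit ((1 : E2 →L[ℂ] E2) - t) := (Units.oneSub t htlt).isUnit
  have heq : C - w • (1 : E2 →L[ℂ] E2) = -((w-1) • ((1:E2 →L[ℂ] E2) - t)) := by
    rw [smul_sub, ht, smul_smul, mul_inv_cancel₀ hw0, one_smul, neg_sub, sub_smul, one_smul,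
      sub_sub_sub_cancel_right]
  rw [heq]
  apply IsUnit.neg
  rw [show ((w-1) • ((1:E2 →L[ℂ] E2) - t)) = ((w-1) • (1 : E2 →L[ℂ] E2)) * ((1:E2 →L[ℂ] E2) - t)
    by rw [smul_mul_assoc, one_mul]]
  apply IsUnit.mul _ hu
  rw [show ((w-1) • (1 : E2 →L[ℂ] E2)) = algebraMap ℂ (E2 →L[ℂ] E2) (w-1)
    from (Algebra.algebraMap_eq_smul_one _).symm]
  exact (Ne.isUnit hw0).map (algebraMap ℂ (E2 →L[ℂ] E2))

lemma localSpectrum_subset {C : E2 →L[ℂ] E2} (hC : IsCesaro C) (x : E2) :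
    localSpectrum C x ⊆ closedBall (1:ℂ) 1 := by
  intro z hz
  by_contra hzc
  apply hz
  have hz1 : 1 < ‖z - 1‖ := by
    rw [mem_closedBall, dist_eq_norm, not_le] at hzc
    exact hzc
  refine ⟨{w : ℂ | 1 < ‖w - 1‖}, isOpen_lt continuous_const ((continuous_id.sub continuous_const).norm),
    hz1, fun w => Ring.inverse (C - w • (1 : E2 →L[ℂ] E2)) x, ?_, ?_⟩
  · intro w hw
    have hu : IsUnit (C - w • (1 : E2 →L[ℂ] E2)) := isUnit_aux hC hw
    have h1 : DifferentiableAt ℂ (fun w : ℂ => C - w • (1 : E2 →L[ℂ] E2)) w :=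
      (differentiableAt_const C).sub (differentiableAt_id.smul_const _)
    have h2 : DifferentiableAt ℂ (Ring.inverse : (E2 →L[ℂ] E2) → (E2 →L[ℂ] E2))
        (C - w • (1 : E2 →L[ℂ] E2)) := differentiableAt_inverse hu
    have h3 := (h2.comp w h1).clm_apply (differentiableAt_const x)
    exact h3.differentiableWithinAt
  · intro w hw
    have hu : IsUnit (C - w • (1 : E2 →L[ℂ] E2)) := isUnit_aux hC hw
    have h2 : (C - w • (1 : E2 →L[ℂ] E2)) (Ring.inverse (C - w • (1 : E2 →L[ℂ] E2)) x)
        = C (Ring.inverse (C - w • (1 : E2 →L[ℂ] E2)) x)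
          - w • (Ring.inverse (C - w • (1 : E2 →L[ℂ] E2)) x) := by
      rw [ContinuousLinearMap.sub_apply, ContinuousLinearMap.smul_apply,
        ContinuousLinearMap.one_apply]
    rw [← h2, ← ContinuousLinearMap.mul_apply, Ring.mul_inverse_cancel _ hu,
      ContinuousLinearMap.one_apply]

lemma isOpen_localResolvent {X : Type*} [NormedAddCommGroup X] [NormedSpace ℂ X]
    (T : X →L[ℂ] X) (y : X) : IsOpen (localResolvent T y) := by
  rw [isOpen_iff_forall_mem_open]
  rintro z ⟨U, hU, hz, g, hg, he⟩
  exact ⟨U, fun w hw => ⟨U, hU, hw, g, hg, he⟩, hU, hz⟩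

lemma localSpectrum_zero (T : E2 →L[ℂ] E2) : localSpectrum T 0 = ∅ := by
  rw [localSpectrum, Set.compl_empty_iff]
  ext z
  simp only [Set.mem_univ, iff_true]
  exact ⟨Set.univ, isOpen_univ, trivial, 0, differentiableOn_const 0,
    fun w _ => by simp⟩

lemma closedBall_subset_localSpectrum {C : E2 →L[ℂ] E2} (hC : IsCesaro C) {x : E2}
    (hx : x ≠ 0) : closedBall (1:ℂ) 1 ⊆ localSpectrum C x := by
  have hball : ball (1:ℂ) 1 ⊆ localSpectrum C x := by
    intro μ hμ
    by_contra hres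
    rw [localSpectrum, Set.mem_compl_iff, not_not] at hres
    obtain ⟨U, hU, hzU, g, hgd, hge⟩ := hres
    have hAnal : AnalyticOnNhd ℂ (fun ν => ∑' n, ccseq ν n * x n) (ball (1:ℂ) 1) :=
      (f_diffOn x).analyticOnNhd isOpen_ball
    have hvan : ∀ ν ∈ U ∩ ball (1:ℂ) 1, (fun ν => ∑' n, ccseq ν n * x n) ν = 0 := by
      rintro ν ⟨hν1, hν2⟩
      have s1 : Summable (fun n => ccseq ν n * C (g ν) n) :=
        summable_mul_sq (summable_ccsq hν2) (lp2_summable_sq (C (g ν)))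
      have s2 : Summable (fun n => ccseq ν n * g ν n) :=
        summable_mul_sq (summable_ccsq hν2) (lp2_summable_sq (g ν))
      have hterm : ∀ n : ℕ, ccseq ν n * x n
          = ccseq ν n * C (g ν) n - ν * (ccseq ν n * g ν n) := by
        intro n
        have h := hge ν hν1
        have h2 : x n = C (g ν) n - ν * g ν n := by
          rw [← h, lp.coeFn_sub, Pi.sub_apply, lp.coeFn_smul, Pi.smul_apply, smul_eq_mul]
        rw [h2]; ring
      show (∑' n, ccseq ν n * x n) = 0
      rw [tsum_congr hterm, Summable.tsum_sub s1 (s2.mul_left ν), tsum_mul_left,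
        key_tsum C hC hν2 (g ν), sub_self]
    have hev : (fun ν => ∑' n, ccseq ν n * x n) =ᶠ[𝓝 μ] 0 :=
      Filter.eventuallyEq_of_mem ((hU.inter isOpen_ball).mem_nhds ⟨hzU, hμ⟩) hvan
    have hzero : Set.EqOn (fun ν => ∑' n, ccseq ν n * x n) 0 (ball (1:ℂ) 1) :=
      hAnal.eqOn_zero_of_preconnected_of_eventuallyEq_zero
        (convex_ball (1:ℂ) 1).isPreconnected hμ hev
    exact hx (f_vanish x (fun ν hν => hzero hν))
  have hcl : IsClosed (localSpectrum C x) := (isOpen_localResolvent C x).isClosed_compl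
  rw [← closure_ball (1:ℂ) one_ne_zero]
  exact hcl.closure_subset_iff.2 hball

/-- the Cesàro operator on ℓ² has Dunford's property (C): for every
closed `F ⊆ ℂ` the local spectral subspace `{x : σ_C(x) ⊆ F}` is a norm-closed
linear subspace of ℓ². -/
theorem stmt_16 (C : lp (fun _ : ℕ => ℂ) 2 →L[ℂ] lp (fun _ : ℕ => ℂ) 2)
    (hC : IsCesaro C) (F : Set ℂ) (hF : IsClosed F) :
    ∃ M : Submodule ℂ (lp (fun _ : ℕ => ℂ) 2),
      (M : Set (lp (fun _ : ℕ => ℂ) 2)) = {x | localSpectrum C x ⊆ F} ∧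
      IsClosed (M : Set (lp (fun _ : ℕ => ℂ) 2)) := by
  by_cases hD : closedBall (1:ℂ) 1 ⊆ F
  · refine ⟨⊤, ?_, ?_⟩
    · rw [Submodule.top_coe]
      ext x
      simp only [Set.mem_univ, Set.mem_setOf_eq, true_iff]
      exact (localSpectrum_subset hC x).trans hD
    · rw [Submodule.top_coe]; exact isClosed_univ
  · obtain ⟨z, hz1, hz2⟩ := Set.not_subset.1 hD
    refine ⟨⊥, ?_, ?_⟩
    · rw [Submodule.bot_coe]
      ext x
      simp only [Set.mem_singleton_iff, Set.mem_setOf_eq]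
      constructor
      · rintro rfl
        rw [localSpectrum_zero]
        exact Set.empty_subset F
      · intro h
        by_contra hx0
        exact hz2 (h (closedBall_subset_localSpectrum hC hx0 hz1))
    · rw [Submodule.bot_coe]; exact isClosed_singleton
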